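/- Let A ∈ ℝ^{n×n} and let Ū ∈ ℝ^{n×r} have orthonormal columns spanning an A-invariant subspace (i.e. (I_n − ŪŪ⊤) A Ū = 0). If A_Ū := Ū⊤AŪ is invertible, then Ū is a fixed point of one step of the natural power method, U ↦ AU(U⊤A⊤AU)^{-1/2}, if and only if A_Ū is symmetric positive definite (equivalently A_Ū = (A_Ū⊤ A_Ū)^{1/2}). -/

import Mathlib

open Matrix

open Classical in
noncomputable def invSqrt {r : ℕ} (M : Matrix (Fin r) (Fin r) ℝ) :
    Matrix (Fin r) (Fin r) ℝ :=
  if h : M.PosSemidef then ((h.1.eigenvectorUnitary : Matrix (Fin r) (Fin r) ℝ) *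
    diagonal ((↑) ∘ (√·) ∘ h.1.eigenvalues) *
    (star h.1.eigenvectorUnitary : Matrix (Fin r) (Fin r) ℝ))⁻¹ else 0

open scoped MatrixOrder

lemma posDef_of_posSemidef_isUnit_det {r : ℕ} {M : Matrix (Fin r) (Fin r) ℝ}
    (h : M.PosSemidef) (hd : IsUnit M.det) : M.PosDef := by
  exact h.posDef_iff_isUnit.mpr ((isUnit_iff_isUnit_det M).mpr hd)

/-- A basis `Ū` of an `A`-invariant subspace with invertible compression `A_Ū`
is a fixed point of the natural power method step iff `A_Ū` is symmetric
positive definite. -/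
theorem stmt_6 {n r : ℕ} (A : Matrix (Fin n) (Fin n) ℝ)
    (U : Matrix (Fin n) (Fin r) ℝ) (hUorth : Uᵀ * U = 1)
    (hinv : (1 - U * Uᵀ) * A * U = 0)
    (hAU : IsUnit (Uᵀ * A * U).det) :
    A * U * invSqrt (Uᵀ * Aᵀ * A * U) = U ↔ (Uᵀ * A * U).PosDef := by
  set B := Uᵀ * A * U with hB
  -- invariance: A U = U B
  have hAUeq : A * U = U * B := by
    have h : A * U - U * Uᵀ * A * U = 0 := by
      have := hinv
      rwa [Matrix.sub_mul, Matrix.sub_mul, Matrix.one_mul] at this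
    rw [sub_eq_zero] at h
    rw [h, hB, Matrix.mul_assoc, Matrix.mul_assoc, Matrix.mul_assoc]
  have hCT : Bᴴ = Bᵀ := by
    ext i j; simp [conjTranspose_apply]
  have hBT : Bᵀ = Uᵀ * Aᵀ * U := by
    rw [hB]; simp [transpose_mul, Matrix.mul_assoc]
  have hM : Uᵀ * Aᵀ * A * U = Bᵀ * B := by
    rw [Matrix.mul_assoc (Uᵀ * Aᵀ) A U, hAUeq, hBT, ← Matrix.mul_assoc]
  have hps : (Bᵀ * B).PosSemidef := by
    have := posSemidef_conjTranspose_mul_self B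
    rwa [hCT] at this
  have hsqrt : invSqrt (Uᵀ * Aᵀ * A * U) = (CFC.sqrt (Bᵀ * B))⁻¹ := by
    rw [hM, invSqrt, dif_pos hps, CFC.sqrt_eq_real_sqrt _ (Matrix.nonneg_iff_posSemidef.mpr hps),
      cfcₙ_eq_cfc (hf := Real.continuous_sqrt.continuousOn) (hf0 := Real.sqrt_zero),
      hps.1.cfc_eq, IsHermitian.cfc, Unitary.conjStarAlgAut_apply]
    rfl
  set S := CFC.sqrt (Bᵀ * B) with hS
  have hSS : S * S = Bᵀ * B := CFC.sqrt_mul_sqrt_self _ (Matrix.nonneg_iff_posSemidef.mpr hps)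
  -- S is invertible
  have hdetS : IsUnit S.det := by
    have : IsUnit (S.det * S.det) := by
      rw [← det_mul, hSS, det_mul, det_transpose]
      exact hAU.mul hAU
    exact isUnit_of_mul_isUnit_left this
  rw [hsqrt, hAUeq]
  constructor
  · intro hfix
    have h2 : Uᵀ * (U * B * S⁻¹) = Uᵀ * U := congrArg (Uᵀ * ·) hfix
    rw [hUorth, ← Matrix.mul_assoc, ← Matrix.mul_assoc, hUorth, one_mul] at h2
    have hBS : B = S := by
      have h3 := congrArg (· * S) h2
      simpa [Matrix.mul_assoc, nonsing_inv_mul S hdetS, one_mul] using h3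
    rw [hBS] at hAU ⊢
    exact posDef_of_posSemidef_isUnit_det (Matrix.nonneg_iff_posSemidef.mp (CFC.sqrt_nonneg _)) hAU
  · intro hpd
    have hsym : Bᵀ = B := by
      have := hpd.1
      rwa [IsHermitian, hCT] at this
    have hBS : B = S := by
      refine (CFC.sqrt_unique ?_ (Matrix.nonneg_iff_posSemidef.mpr hpd.posSemidef)).symm
      rw [hsym]
    rw [Matrix.mul_assoc, hBS, mul_nonsing_inv S hdetS, Matrix.mul_one]
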